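/- arXiv:2302.08988 — 12 statements merged into one kernel-verified Lean document; each statement's English description precedes it below -/
import Mathlib

section
/- Let G be a subgroup of the monoid ℕ^ℕ under composition, f ∈ G, x ∈ ℕ, and x' ∈ im(f) with f(x) = f(x'). Then for every g ∈ G, g(x) = f(x) if and only if g(x') = f(x'). -/
/-- Let `G` be a subgroup of the monoid `ℕ^ℕ` under composition, `f ∈ G`,
`x ∈ ℕ`, and `x' ∈ im(f)` with `f x = f x'`. Then for every `g ∈ G`,
`g x = f x` iff `g x' = f x'`. -/
theorem subgroup_agreement_transfer
    (G : Set (ℕ → ℕ))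
    (hmul : ∀ f ∈ G, ∀ g ∈ G, g ∘ f ∈ G)
    (e : ℕ → ℕ) (heG : e ∈ G)
    (hid : ∀ g ∈ G, g ∘ e = g ∧ e ∘ g = g)
    (hinv : ∀ g ∈ G, ∃ h ∈ G, h ∘ g = e ∧ g ∘ h = e)
    (f : ℕ → ℕ) (hf : f ∈ G) (x x' : ℕ) (hx' : x' ∈ Set.range f)
    (hfx : f x = f x') :
    ∀ g ∈ G, (g x = f x ↔ g x' = f x') := by
  obtain ⟨y, hy⟩ := hx'
  -- e fixes x' since x' is in the range of f and e ∘ f = f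
  have hex' : e x' = x' := by
    have := congrFun (hid f hf).2 y
    simpa [hy] using this
  -- from the inverse of f: h (f z) = e z
  obtain ⟨h, hhG, hhf, hfh⟩ := hinv f hf
  have hex : e x = x' := by
    have h1 : h (f x) = e x := congrFun hhf x
    have h2 : h (f x') = e x' := congrFun hhf x'
    rw [hfx, h2, hex'] at h1
    omega
  -- any g ∈ G agrees on x and x'
  intro g hg
  have hgxx' : g x = g x' := by
    have := congrFun (hid g hg).1 x
    simp only [Function.comp_apply, hex] at this
    exact this.symm
  have hfxx' : f x = f x' := hfx
  rw [hgxx', hfxx']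
end

section
/- Every topological group that embeds topologically into ℕ^ℕ (with the product topology, as a topological semigroup under composition) also embeds topologically into the symmetric group S_ℕ with the topology of pointwise convergence. -/
open Topology

/-- Every topological group that embeds topologically into `ℕ^ℕ` (with the
product topology, as a topological semigroup under left-to-right composition)
also embeds topologically into the symmetric group `S_ℕ` with the topology of
pointwise convergence (i.e. the subspace topology induced from `ℕ^ℕ`). -/
theorem topological_group_embeds_in_symmetric_group_of_embeds_in_NN
    (G : Type*) [Group G] [TopologicalSpace G] [IsTopologicalGroup G]
    (h : ∃ φ : G → (ℕ → ℕ), (∀ a b : G, φ (a * b) = φ b ∘ φ a) ∧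
      Topology.IsEmbedding φ) :
    ∃ ψ : G →* Equiv.Perm ℕ, Function.Injective ψ ∧
      Topology.IsEmbedding (fun g : G => ((ψ g : Equiv.Perm ℕ) : ℕ → ℕ)) := by
  classical
  obtain ⟨φ, hm, hφ⟩ := h
  set e : ℕ → ℕ := φ 1 with he_def
  have hmul : ∀ a b : G, ∀ n, φ (a * b) n = φ b (φ a n) := fun a b n =>
    congrFun (hm a b) n
  have hee : ∀ n, e (e n) = e n := by
    intro n
    have := hmul 1 1 n
    simpa using this.symm
  have hge : ∀ (g : G) n, φ g (e n) = φ g n := by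
    intro g n
    have := hmul 1 g n
    simpa using this.symm
  have heg : ∀ (g : G) n, e (φ g n) = φ g n := by
    intro g n
    have := hmul g 1 n
    simpa using this.symm
  have hfix : ∀ n, n ∈ Set.range e → e n = n := by
    rintro n ⟨m, rfl⟩; exact hee m
  -- the extension of φ g by the identity off the common image
  set F : G → ℕ → ℕ := fun g n => if n ∈ Set.range e then φ g n else n with hF_def
  have hFmem : ∀ (g : G) n, n ∈ Set.range e → F g n = φ g n := by
    intro g n hn; simp only [hF_def, if_pos hn]
  have hFnot : ∀ (g : G) n, n ∉ Set.range e → F g n = n := by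
    intro g n hn; simp only [hF_def, if_neg hn]
  have hFcomp : ∀ (a b : G) n, F a (F b n) = F (b * a) n := by
    intro a b n
    by_cases hn : n ∈ Set.range e
    · have h1 : F b n = φ b n := hFmem b n hn
      have h2 : φ b n ∈ Set.range e := ⟨φ b n, heg b n⟩
      rw [h1, hFmem a _ h2, hFmem (b * a) n hn, hmul b a n]
    · rw [hFnot b n hn, hFnot a n hn, hFnot (b * a) n hn]
  have hFone : ∀ n, F 1 n = n := by
    intro n
    by_cases hn : n ∈ Set.range e
    · rw [hFmem 1 n hn]; exact hfix n hn
    · exact hFnot 1 n hn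
  have hli : ∀ (g : G) n, F g (F g⁻¹ n) = n := by
    intro g n; rw [hFcomp g g⁻¹ n, inv_mul_cancel, hFone]
  have hri : ∀ (g : G) n, F g⁻¹ (F g n) = n := by
    intro g n; rw [hFcomp g⁻¹ g n, mul_inv_cancel, hFone]
  -- φ g is determined by F g
  have hphiF : ∀ (g : G) n, φ g n = F g (e n) := by
    intro g n
    rw [hFmem g (e n) ⟨n, rfl⟩, hge]
  -- F is injective
  have hFinj : Function.Injective F := by
    intro a b hab
    apply hφ.injective
    funext n
    rw [hphiF a n, hphiF b n, hab]
  -- F is continuous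
  have hFcont : Continuous F := by
    refine continuous_pi fun n => ?_
    by_cases hn : n ∈ Set.range e
    · have : (fun g : G => F g n) = fun g => φ g n := by
        funext g; exact hFmem g n hn
      rw [this]
      exact (continuous_apply n).comp hφ.continuous
    · have : (fun g : G => F g n) = fun _ => n := by
        funext g; exact hFnot g n hn
      rw [this]
      exact continuous_const
  -- F is an embedding
  have hr : Continuous (fun f : ℕ → ℕ => fun n => f (e n)) :=
    continuous_pi fun n => continuous_apply (e n)
  have hcomp : φ = (fun f : ℕ → ℕ => fun n => f (e n)) ∘ F := by
    funext g n; exact hphiF g n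
  have hFemb : Topology.IsEmbedding F := by
    refine ⟨⟨le_antisymm hFcont.le_induced ?_⟩, hFinj⟩
    calc TopologicalSpace.induced F Pi.topologicalSpace
        ≤ TopologicalSpace.induced F (TopologicalSpace.induced
            (fun f : ℕ → ℕ => fun n => f (e n)) Pi.topologicalSpace) :=
          induced_mono hr.le_induced
      _ = TopologicalSpace.induced φ Pi.topologicalSpace := by
          rw [induced_compose, ← hcomp]
      _ ≤ _ := le_of_eq hφ.eq_induced.symm
  -- the permutations
  let p : G → Equiv.Perm ℕ := fun g => ⟨F g⁻¹, F g, fun n => hli g n, fun n => hri g n⟩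
  have hp_mul : ∀ a b : G, p (a * b) = p a * p b := by
    intro a b
    ext n
    show F (a * b)⁻¹ n = F a⁻¹ (F b⁻¹ n)
    rw [hFcomp a⁻¹ b⁻¹ n, mul_inv_rev]
  refine ⟨MonoidHom.mk' p hp_mul, ?_, ?_⟩
  · intro a b hab
    have : F a⁻¹ = F b⁻¹ := congrArg (fun q : Equiv.Perm ℕ => (q : ℕ → ℕ)) hab
    have := hFinj this
    exact inv_injective this
  · have hco : (fun g : G => ((MonoidHom.mk' p hp_mul g : Equiv.Perm ℕ) : ℕ → ℕ))
        = F ∘ (fun g : G => g⁻¹) := by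
      funext g; rfl
    rw [hco]
    exact hFemb.comp (Homeomorph.inv G).isEmbedding
end

section
/- Every quotient of a commutative inverse monoid by a Vagner-Preston congruence is either a group or a group with a zero element adjoined. -/
/-- Every quotient of a commutative inverse monoid by a Vagner-Preston
congruence is a group or a group with zero adjoined.  Here `S` is a commutative
monoid with an inverse operation `inv` making it an inverse semigroup, and a
congruence `ρ` is Vagner-Preston if for every `s` either every `t ∈ [s]_ρ`
satisfies `1 ∈ [t t⁻¹]_ρ`, or `[s t]_ρ = [s]_ρ` for all `t`.  The quotient is a
group (every element invertible), or a group with zero adjoined (there is an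
absorbing element `z ≠ 1` whose complement is a group under multiplication). -/
theorem quotient_of_comm_inverse_monoid_by_VP_congruence
    (S : Type*) [CommMonoid S] (inv : S → S)
    (hreg : ∀ x : S, x * inv x * x = x ∧ inv x * x * inv x = inv x)
    (huniq : ∀ x y : S, x * y * x = x → y * x * y = y → y = inv x)
    (ρ : Con S)
    (hVP : ∀ s : S, (∀ t : S, ρ s t → ρ 1 (t * inv t)) ∨ (∀ t : S, ρ (s * t) s)) :
    (∀ x : ρ.Quotient, ∃ y : ρ.Quotient, x * y = 1) ∨
    (∃ z : ρ.Quotient, z ≠ 1 ∧ (∀ x : ρ.Quotient, z * x = z ∧ x * z = z) ∧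
      (∀ x y : ρ.Quotient, x ≠ z → y ≠ z → x * y ≠ z) ∧
      (∀ x : ρ.Quotient, x ≠ z → ∃ y : ρ.Quotient, y ≠ z ∧ x * y = 1)) := by
  have hsurj : ∀ x : ρ.Quotient, ∃ a : S, (↑a : ρ.Quotient) = x := fun x =>
    Quotient.exists_rep x
  by_cases hb : ∃ s : S, ∀ t : S, ρ (s * t) s
  · obtain ⟨s₀, hs₀⟩ := hb
    have habs : ∀ x : ρ.Quotient, (↑s₀ : ρ.Quotient) * x = ↑s₀ := by
      intro x
      obtain ⟨t, rfl⟩ := hsurj x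
      have : ((↑(s₀ * t) : ρ.Quotient)) = ↑s₀ := ρ.eq.mpr (hs₀ t)
      simpa using this
    by_cases hz1 : (↑s₀ : ρ.Quotient) = 1
    · -- quotient is trivial, hence a group
      left
      intro x
      refine ⟨1, ?_⟩
      have h1 : x = 1 := by
        have := habs x
        rw [hz1, one_mul] at this
        exact this
      rw [h1, one_mul]
    · right
      -- key: any x ≠ z is invertible
      have hinv : ∀ a : S, (↑a : ρ.Quotient) ≠ ↑s₀ →
          (↑a : ρ.Quotient) * ↑(inv a) = 1 := by
        intro a ha
        rcases hVP a with h | h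
        · have h1 : ρ 1 (a * inv a) := h a (ρ.refl a)
          have : ((↑(a * inv a) : ρ.Quotient)) = ↑(1 : S) := ρ.eq.mpr (ρ.symm h1)
          simpa using this
        · exfalso
          apply ha
          have h1 : ((↑(a * s₀) : ρ.Quotient)) = ↑a := ρ.eq.mpr (h s₀)
          calc (↑a : ρ.Quotient) = ↑(a * s₀) := h1.symm
            _ = ↑a * ↑s₀ := by simp
            _ = ↑s₀ * ↑a := mul_comm _ _
            _ = ↑s₀ := habs _
      refine ⟨↑s₀, hz1, fun x => ⟨habs x, by rw [mul_comm]; exact habs x⟩, ?_, ?_⟩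
      · intro x y hx hy hxy
        obtain ⟨a, rfl⟩ := hsurj x
        obtain ⟨b, rfl⟩ := hsurj y
        have ha := hinv a hx
        have hb' := hinv b hy
        apply hz1
        calc (↑s₀ : ρ.Quotient)
            = ↑s₀ * (↑(inv a) * ↑(inv b)) := (habs _).symm
          _ = (↑a * ↑b) * (↑(inv a) * ↑(inv b)) := by rw [hxy]
          _ = (↑a * ↑(inv a)) * (↑b * ↑(inv b)) := by
              rw [mul_mul_mul_comm]
          _ = 1 := by rw [ha, hb', one_mul]
      · intro x hx
        obtain ⟨a, rfl⟩ := hsurj x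
        refine ⟨↑(inv a), ?_, hinv a hx⟩
        intro hia
        apply hz1
        calc (↑s₀ : ρ.Quotient) = ↑a * ↑s₀ := by rw [mul_comm]; exact (habs _).symm
          _ = ↑a * ↑(inv a) := by rw [hia]
          _ = 1 := hinv a hx
  · left
    intro x
    obtain ⟨a, rfl⟩ := hsurj x
    rcases hVP a with h | h
    · refine ⟨↑(inv a), ?_⟩
      have h1 : ρ 1 (a * inv a) := h a (ρ.refl a)
      have : ((↑(a * inv a) : ρ.Quotient)) = ↑(1 : S) := ρ.eq.mpr (ρ.symm h1)
      simpa using this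
    · exact absurd ⟨a, h⟩ hb
end

section
/- Let X be a semilattice endowed with a T1 topology such that all left translations x ↦ ax are continuous, and suppose the underlying topological space is scattered. Then X is a U₂-semilattice: for every open set U and every x ∈ U there exist y ∈ U and a clopen ideal I ⊆ X such that x ∈ X \ I ⊆ ↑y. -/
/-- Let `X` be a semilattice (commutative idempotent semigroup) endowed with a
`T1` topology for which all translations `x ↦ x * a` are continuous, and
suppose the space is scattered.  Then `X` is a `U₂`-semilattice: for every open
set `U` and every `x ∈ U` there exist `y ∈ U` and a clopen ideal `I ⊆ X` such
that `x ∈ X \ I ⊆ ↑y`, where `↑y = {z | y * z = y}` is the upper cone of `y`. -/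
theorem scattered_T1_semitopological_semilattice_is_U2
    (X : Type*) [Semigroup X] [TopologicalSpace X] [T1Space X]
    (hcomm : ∀ x y : X, x * y = y * x)
    (hidem : ∀ x : X, x * x = x)
    (hcont : ∀ a : X, Continuous fun x : X => x * a)
    (hscat : ∀ A : Set X, A.Nonempty →
      ∃ x ∈ A, ∃ U : Set X, IsOpen U ∧ U ∩ A = {x}) :
    ∀ U : Set X, IsOpen U → ∀ x ∈ U, ∃ y ∈ U, ∃ I : Set X,
      IsClopen I ∧ (∀ i ∈ I, ∀ z : X, z * i ∈ I) ∧
      x ∉ I ∧ ∀ z ∉ I, y * z = y := by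
  intro U hU x hx
  obtain ⟨y, ⟨⟨t, hyt⟩, hyU⟩, V, hV, hVA⟩ :=
    hscat ({w | ∃ s, x * s = w} ∩ U) ⟨x, ⟨x, hidem x⟩, hx⟩
  have hyV : y ∈ V := by
    have : y ∈ V ∩ ({w | ∃ s, x * s = w} ∩ U) := by rw [hVA]; rfl
    exact this.1
  have hyx : y * x = y := by
    rw [← hyt, mul_assoc, hcomm t x, ← mul_assoc, hidem]
  have hkey : ∀ z : X, z * y ∈ V ∩ U → z * y = y := by
    intro z hz
    have hmem : z * y ∈ V ∩ ({w | ∃ s, x * s = w} ∩ U) :=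
      ⟨hz.1, ⟨t * z, by rw [← mul_assoc, hyt, hcomm y z]⟩, hz.2⟩
    rw [hVA] at hmem
    exact hmem
  have hSopen : IsOpen {z : X | y * z = y} := by
    have heq : {z : X | y * z = y} = (fun z => z * y) ⁻¹' (V ∩ U) := by
      ext z
      constructor
      · intro hz
        simp only [Set.mem_preimage]
        rw [hcomm z y, hz]
        exact ⟨hyV, hyU⟩
      · intro hz
        have := hkey z hz
        rwa [hcomm z y] at this
    rw [heq]
    exact (hV.inter hU).preimage (hcont y)
  have hSclosed : IsClosed {z : X | y * z = y} := by
    have heq : {z : X | y * z = y} = (fun z => z * y) ⁻¹' {y} := by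
      ext z
      simp only [Set.mem_preimage, Set.mem_singleton_iff, Set.mem_setOf_eq]
      rw [hcomm z y]
    rw [heq]
    exact isClosed_singleton.preimage (hcont y)
  refine ⟨y, hyU, {z : X | y * z = y}ᶜ,
    ⟨hSopen.isClosed_compl, hSclosed.isOpen_compl⟩, ?_, ?_, ?_⟩
  · intro i hi z hzi
    simp only [Set.mem_compl_iff, Set.mem_setOf_eq] at hi hzi
    apply hi
    have h : y * (z * i) = y := hzi
    calc y * i = (y * (z * i)) * i := by rw [h]
      _ = y * (z * (i * i)) := by rw [mul_assoc, mul_assoc]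
      _ = y * (z * i) := by rw [hidem]
      _ = y := h
  · simp only [Set.mem_compl_iff, Set.mem_setOf_eq, not_not]
    exact hyx
  · intro z hz
    simpa using hz
end

section
/- A scattered topological space is Polish if and only if it is regular and second-countable. -/
open Set Metric Topology

universe u

/-- Iterated "removal of isolated points": `x ∈ scatCB X α` iff for no `β < α` is `x`
isolated in `scatCB X β`. -/
noncomputable def scatCB (X : Type u) [TopologicalSpace X] (α : Ordinal.{u}) : Set X :=
  {x | ∀ β < α, ¬ ∃ U : Set X, IsOpen U ∧ U ∩ scatCB X β = {x}}
termination_by α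
decreasing_by exact ‹_›

lemma mem_scatCB {X : Type u} [TopologicalSpace X] {α : Ordinal.{u}} {x : X} :
    x ∈ scatCB X α ↔ ∀ β < α, ¬ ∃ U : Set X, IsOpen U ∧ U ∩ scatCB X β = {x} := by
  rw [scatCB]; rfl

lemma scatCB_antitone {X : Type u} [TopologicalSpace X] {α β : Ordinal.{u}} (h : β ≤ α) :
    scatCB X α ⊆ scatCB X β := fun x hx => by
  rw [mem_scatCB] at hx ⊢
  exact fun γ hγ => hx γ (hγ.trans_le h)

lemma exists_isolated_rank {X : Type u} [TopologicalSpace X]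
    (hscat : ∀ A : Set X, A.Nonempty → ∃ x ∈ A, ∃ U : Set X, IsOpen U ∧ U ∩ A = {x}) (x : X) :
    ∃ α : Ordinal.{u}, ∃ U : Set X, IsOpen U ∧ U ∩ scatCB X α = {x} := by
  by_contra hcon
  set A : Set X := {z | ∀ α : Ordinal.{u}, ¬ ∃ U : Set X, IsOpen U ∧ U ∩ scatCB X α = {z}} with hA
  have hxA : x ∈ A := fun α h => hcon ⟨α, h⟩
  have hAsub : ∀ α : Ordinal.{u}, A ⊆ scatCB X α := fun α z hz =>
    mem_scatCB.mpr fun β _ => hz β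
  obtain ⟨x₀, hx₀A, U, hU, hUA⟩ := hscat A ⟨x, hxA⟩
  have hz : ∀ z : ↥(U ∩ Aᶜ), ∃ α : Ordinal.{u}, ∃ V : Set X, IsOpen V ∧ V ∩ scatCB X α = {z.1} := by
    rintro ⟨z, hzU, hzA⟩
    simpa [hA] using hzA
  choose g hg using hz
  set α' : Ordinal.{u} := ⨆ z : ↥(U ∩ Aᶜ), Order.succ (g z) with hα'
  have key : ∀ z : ↥(U ∩ Aᶜ), z.1 ∉ scatCB X α' := by
    intro z hmem
    rw [mem_scatCB] at hmem
    have hlt : g z < α' :=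
      lt_of_lt_of_le (Order.lt_succ _) (le_ciSup (Ordinal.bddAbove_range _) z)
    exact hmem (g z) hlt (hg z)
  have hiso : U ∩ scatCB X α' = {x₀} := by
    apply subset_antisymm
    · rintro z ⟨hzU, hzD⟩
      by_cases hzA : z ∈ A
      · rw [← hUA]; exact ⟨hzU, hzA⟩
      · exact absurd hzD (key ⟨z, hzU, hzA⟩)
    · rw [singleton_subset_iff]
      have hx₀U : x₀ ∈ U ∩ A := by rw [hUA]; rfl
      exact ⟨hx₀U.1, hAsub α' hx₀A⟩
  exact hx₀A α' ⟨U, hU, hiso⟩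

/-- A scattered topological space is Polish if and only if it is regular
(including `T1`) and second-countable. -/
theorem scattered_polish_iff_regular_secondCountable
    (X : Type*) [TopologicalSpace X]
    (hscat : ∀ A : Set X, A.Nonempty →
      ∃ x ∈ A, ∃ U : Set X, IsOpen U ∧ U ∩ A = {x}) :
    PolishSpace X ↔ (T1Space X ∧ RegularSpace X ∧ SecondCountableTopology X) := by
  constructor
  · intro h
    letI := TopologicalSpace.upgradeIsCompletelyMetrizable X
    exact ⟨inferInstance, inferInstance, inferInstance⟩
  · rintro ⟨h1, h2, h3⟩
    haveI : T3Space X := ⟨⟩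
    haveI : TopologicalSpace.MetrizableSpace X := inferInstance
    letI : MetricSpace X := TopologicalSpace.metrizableSpaceMetric X
    -- the completion is a Polish space
    let Y := UniformSpace.Completion X
    let i : X → Y := (↑)
    have hi : Isometry i := UniformSpace.Completion.coe_isometry
    haveI : TopologicalSpace.SeparableSpace Y :=
      (UniformSpace.Completion.denseRange_coe (α := X)).separableSpace
        (UniformSpace.Completion.continuous_coe X)
    haveI : SecondCountableTopology Y := UniformSpace.secondCountable_of_separable Y
    haveI : PolishSpace Y := inferInstance
    -- Cantor-Bendixson rank
    have hex := exists_isolated_rank hscat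
    let r : X → Ordinal := fun x => sInf {α | ∃ U : Set X, IsOpen U ∧ U ∩ scatCB X α = {x}}
    have hrne : ∀ x : X, {α | ∃ U : Set X, IsOpen U ∧ U ∩ scatCB X α = {x}}.Nonempty :=
      fun x => (hex x).imp fun _ h => h
    have hr : ∀ x : X, ∃ U : Set X, IsOpen U ∧ U ∩ scatCB X (r x) = {x} :=
      fun x => csInf_mem (hrne x)
    have hmem : ∀ x : X, x ∈ scatCB X (r x) := by
      intro x
      rw [mem_scatCB]
      intro β hβ hβiso
      exact notMem_of_lt_csInf' hβ hβiso
    -- choose isolating balls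
    have hball : ∀ x : X, ∃ ε > 0, ball x ε ∩ scatCB X (r x) = {x} := by
      intro x
      obtain ⟨U, hUo, hUx⟩ := hr x
      have hxU : x ∈ U := by
        have : x ∈ U ∩ scatCB X (r x) := by rw [hUx]; rfl
        exact this.1
      obtain ⟨ε, hε, hballU⟩ := Metric.isOpen_iff.1 hUo x hxU
      refine ⟨ε, hε, subset_antisymm ?_ ?_⟩
      · intro z hz
        rw [← hUx]
        exact ⟨hballU hz.1, hz.2⟩
      · rw [singleton_subset_iff]
        exact ⟨mem_ball_self hε, hmem x⟩
    choose ε hε hεiso using hball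
    -- the Gδ sets
    let G : ℕ → Set Y := fun n => ⋃ x : X, ball (i x) (min (ε x / 2) (1 / (n + 1)))
    have hGopen : ∀ n, IsOpen (G n) := fun n => isOpen_iUnion fun x => isOpen_ball
    have hGsub : ∀ n x, i x ∈ G n := by
      intro n x
      refine mem_iUnion.2 ⟨x, ?_⟩
      have : (0:ℝ) < min (ε x / 2) (1 / (n + 1)) :=
        lt_min (by linarith [hε x]) (by positivity)
      simpa using this
    have hkey : (⋂ n, G n) = Set.range i := by
      apply subset_antisymm
      · intro y hy
        have h4 : ∀ n : ℕ, ∃ x : X, dist y (i x) < min (ε x / 2) (1 / (n + 1)) := by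
          intro n
          obtain ⟨x, hx⟩ := mem_iUnion.1 (mem_iInter.1 hy n)
          exact ⟨x, by simpa [mem_ball] using hx⟩
        choose xs hxs using h4
        -- pick an index of minimal rank
        obtain ⟨_, ⟨n₀, rfl⟩, hmin⟩ :=
          Ordinal.lt_wf.has_min (Set.range fun n => r (xs n)) (Set.range_nonempty _)
        -- large indices give the same point
        obtain ⟨N, hN⟩ := exists_nat_one_div_lt (half_pos (hε (xs n₀)))
        have heq : ∀ m : ℕ, N ≤ m → xs m = xs n₀ := by
          intro m hm
          have hd : dist (xs m) (xs n₀) < ε (xs n₀) := by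
            have h1 : dist y (i (xs n₀)) < ε (xs n₀) / 2 :=
              lt_of_lt_of_le (hxs n₀) (min_le_left _ _)
            have h2 : dist y (i (xs m)) < 1 / (m + 1) :=
              lt_of_lt_of_le (hxs m) (min_le_right _ _)
            have h3 : (1:ℝ) / (m + 1) ≤ 1 / (N + 1) := by
              apply one_div_le_one_div_of_le (by positivity)
              have : (N:ℝ) ≤ m := Nat.cast_le.2 hm
              linarith
            have := hi.dist_eq (xs m) (xs n₀)
            calc dist (xs m) (xs n₀) = dist (i (xs m)) (i (xs n₀)) := this.symm
              _ ≤ dist (i (xs m)) y + dist y (i (xs n₀)) := dist_triangle _ _ _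
              _ < 1 / (N + 1) + ε (xs n₀) / 2 := by
                  rw [dist_comm]
                  exact add_lt_add_of_le_of_lt (le_trans h2.le h3) h1
              _ < ε (xs n₀) / 2 + ε (xs n₀) / 2 := by linarith
              _ = ε (xs n₀) := by ring
          have hrle : r (xs n₀) ≤ r (xs m) :=
            not_lt.1 (hmin _ (Set.mem_range_self m))
          have : xs m ∈ ball (xs n₀) (ε (xs n₀)) ∩ scatCB X (r (xs n₀)) :=
            ⟨by simpa [mem_ball] using hd, scatCB_antitone hrle (hmem (xs m))⟩
          rw [hεiso (xs n₀)] at this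
          exact this
        -- y is the image of that point
        refine ⟨xs n₀, ?_⟩
        have hdist : ∀ δ : ℝ, 0 < δ → dist y (i (xs n₀)) < δ := by
          intro δ hδ
          obtain ⟨M, hM⟩ := exists_nat_one_div_lt hδ
          have h2 : dist y (i (xs (max N M))) < 1 / (max N M + 1) :=
            lt_of_lt_of_le (hxs _) (min_le_right _ _)
          rw [heq _ (le_max_left _ _)] at h2
          refine h2.trans (lt_of_le_of_lt ?_ hM)
          apply one_div_le_one_div_of_le (by positivity)
          have : (M:ℝ) ≤ max N M := by exact_mod_cast le_max_right N M
          linarith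
        have : dist y (i (xs n₀)) = 0 := by
          by_contra hne
          have hpos : 0 < dist y (i (xs n₀)) := lt_of_le_of_ne dist_nonneg (Ne.symm hne)
          exact absurd (hdist _ hpos) (lt_irrefl _)
        exact (eq_of_dist_eq_zero this).symm
      · rintro _ ⟨x, rfl⟩
        exact mem_iInter.2 fun n => hGsub n x
    -- closed embedding into a countable product of open (hence Polish) subsets
    haveI : ∀ n, PolishSpace (G n) := fun n => (hGopen n).polishSpace
    let F : X → ∀ n : ℕ, G n := fun x n => ⟨i x, hGsub n x⟩
    have hF_cont : Continuous F :=
      continuous_pi fun n => (hi.continuous).subtype_mk _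
    have hF_ind : Topology.IsInducing F := by
      refine Topology.IsInducing.of_comp hF_cont ?_
        (g := fun y : ∀ n : ℕ, G n => (y 0).1) ?_
      · exact continuous_subtype_val.comp (continuous_apply 0)
      · exact hi.isEmbedding.isInducing
    have hF_inj : Function.Injective F := by
      intro a b hab
      have : i a = i b := congrArg (fun y => (y 0).1) hab
      exact hi.injective this
    have hF_range : Set.range F = {y : ∀ n : ℕ, G n | ∀ n, (y n).1 = (y 0).1} := by
      apply subset_antisymm
      · rintro _ ⟨x, rfl⟩ n
        rfl
      · intro y hy
        have hmem0 : (y 0).1 ∈ ⋂ n, G n := mem_iInter.2 fun n => hy n ▸ (y n).2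
        rw [hkey] at hmem0
        obtain ⟨x, hx⟩ := hmem0
        refine ⟨x, funext fun n => Subtype.ext ?_⟩
        show i x = (y n).1
        rw [hy n, hx]
    have hF_closed : IsClosed (Set.range F) := by
      rw [hF_range]
      have : {y : ∀ n : ℕ, G n | ∀ n, (y n).1 = (y 0).1} =
          ⋂ n, {y : ∀ n : ℕ, G n | (y n).1 = (y 0).1} := by
        ext y; simp
      rw [this]
      exact isClosed_iInter fun n => isClosed_eq
        (continuous_subtype_val.comp (continuous_apply n))
        (continuous_subtype_val.comp (continuous_apply 0))
    have hF : Topology.IsClosedEmbedding F := ⟨⟨hF_ind, hF_inj⟩, hF_closed⟩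
    exact hF.polishSpace
end

section
/- The symmetric inverse monoid I_ℕ with its canonical topology does not embed topologically into ℕ^ℕ with the product topology; equivalently, there is no countable family of right congruences on I_ℕ, each with countably many classes, whose equivalence classes form a basis of the canonical topology on I_ℕ. -/
/-- A partial bijection of `ℕ`, encoded as its graph: a functional and
co-functional relation. -/
def IsPartialBij (R : Set (ℕ × ℕ)) : Prop :=
  (∀ x y y', (x, y) ∈ R → (x, y') ∈ R → y = y') ∧
  (∀ x x' y, (x, y) ∈ R → (x', y) ∈ R → x = x')

/-- The symmetric inverse monoid `I_ℕ` of all partial bijections between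
subsets of `ℕ`. -/
def IN : Type := {R : Set (ℕ × ℕ) // IsPartialBij R}

/-- Left-to-right composition of partial bijections. -/
instance : Mul IN :=
  ⟨fun f g => ⟨{p | ∃ y, (p.1, y) ∈ f.1 ∧ (y, p.2) ∈ g.1}, by
    obtain ⟨f, hf1, hf2⟩ := f; obtain ⟨g, hg1, hg2⟩ := g
    constructor
    · rintro x y y' ⟨a, ha1, ha2⟩ ⟨b, hb1, hb2⟩
      cases hf1 x a b ha1 hb1
      exact hg1 a y y' ha2 hb2
    · rintro x x' y ⟨a, ha1, ha2⟩ ⟨b, hb1, hb2⟩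
      cases hg2 a b y ha2 hb2
      exact hf2 x x' a ha1 hb1⟩⟩

/-- The inverse of a partial bijection is its transpose. -/
instance : Inv IN :=
  ⟨fun f => ⟨{p | (p.2, p.1) ∈ f.1},
    ⟨fun x y y' h h' => f.2.2 y y' x h h',
     fun x x' y h h' => f.2.1 y x x' h h'⟩⟩⟩

/-- The canonical Polish semigroup topology on `I_ℕ`, generated by the sets
`U_{x,y} = {h | (x,y) ∈ h}`, `W_x = {h | x ∉ dom h}` and
`W_x⁻¹ = {h | x ∉ im h}`. -/
instance : TopologicalSpace IN :=
  TopologicalSpace.generateFrom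
    ({A | ∃ x y : ℕ, A = {h : IN | (x, y) ∈ h.1}} ∪
     {A | ∃ x : ℕ, A = {h : IN | ∀ y, (x, y) ∉ h.1}} ∪
     {A | ∃ y : ℕ, A = {h : IN | ∀ x, (x, y) ∉ h.1}})

/-- The subbasis of the canonical topology. -/
def INsub : Set (Set IN) :=
    ({A | ∃ x y : ℕ, A = {h : IN | (x, y) ∈ h.1}} ∪
     {A | ∃ x : ℕ, A = {h : IN | ∀ y, (x, y) ∉ h.1}} ∪
     {A | ∃ y : ℕ, A = {h : IN | ∀ x, (x, y) ∉ h.1}})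

/-- The empty partial bijection. -/
def emptyIN : IN := ⟨∅, ⟨fun _ _ _ h _ => h.elim, fun _ _ _ h _ => h.elim⟩⟩

/-- The partial bijection `{(n,n)}`. -/
def eIN (n : ℕ) : IN :=
  ⟨{(n, n)}, ⟨fun x y y' h h' => by
      simp only [Set.mem_singleton_iff, Prod.mk.injEq] at h h'; omega,
    fun x x' y h h' => by
      simp only [Set.mem_singleton_iff, Prod.mk.injEq] at h h'; omega⟩⟩

/-- The partial bijection `{(n,0)}`. -/
def zIN (n : ℕ) : IN :=
  ⟨{(n, 0)}, ⟨fun x y y' h h' => by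
      simp only [Set.mem_singleton_iff, Prod.mk.injEq] at h h'; omega,
    fun x x' y h h' => by
      simp only [Set.mem_singleton_iff, Prod.mk.injEq] at h h'; omega⟩⟩

lemma empty_mul (z : IN) : emptyIN * z = emptyIN := by
  apply Subtype.ext
  ext p
  constructor
  · rintro ⟨y, h, -⟩; exact h.elim
  · intro h; exact h.elim

lemma e_mul_z (n : ℕ) : eIN n * zIN n = zIN n := by
  apply Subtype.ext
  ext ⟨a, b⟩
  constructor
  · rintro ⟨y, h1, h2⟩
    simp only [eIN, zIN, Set.mem_singleton_iff, Prod.mk.injEq] at h1 h2 ⊢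
    exact ⟨h1.1, h2.2⟩
  · intro h
    simp only [zIN, Set.mem_singleton_iff, Prod.mk.injEq] at h
    exact ⟨n, by simp [eIN, zIN, h.1, h.2]⟩

/-- Any open set containing the empty function contains `eIN n` for
cofinitely many `n`. -/
lemma key : ∀ V : Set IN, TopologicalSpace.GenerateOpen INsub V →
    emptyIN ∈ V → {n : ℕ | eIN n ∉ V}.Finite := by
  intro V hV
  induction hV with
  | @basic A hA =>
    rcases hA with (⟨x, y, rfl⟩ | ⟨x, rfl⟩) | ⟨y, rfl⟩
    · intro h; exact absurd h (fun hc => hc.elim)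
    · intro _
      refine (Set.finite_singleton x).subset fun n hn => ?_
      simp only [Set.mem_setOf_eq, not_forall, not_not] at hn
      obtain ⟨y, hy⟩ := hn
      simp only [eIN, Set.mem_singleton_iff, Prod.mk.injEq] at hy
      simp [hy.1.symm]
    · intro _
      refine (Set.finite_singleton y).subset fun n hn => ?_
      simp only [Set.mem_setOf_eq, not_forall, not_not] at hn
      obtain ⟨x, hx⟩ := hn
      simp only [eIN, Set.mem_singleton_iff, Prod.mk.injEq] at hx
      simp [hx.2.symm]
  | univ => intro _; simp
  | inter A B _ _ ihA ihB =>
    intro h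
    refine ((ihA h.1).union (ihB h.2)).subset fun n hn => ?_
    simp only [Set.mem_setOf_eq, Set.mem_inter_iff, not_and_or] at hn
    simpa using hn
  | sUnion σ _ ih =>
    rintro ⟨A, hA, hmA⟩
    refine (ih A hA hmA).subset fun n hn => ?_
    exact fun hc => hn ⟨A, hA, hc⟩

lemma key' (V : Set IN) (hV : IsOpen V) (h : emptyIN ∈ V) : ∃ n, eIN n ∈ V := by
  have hfin := key V hV h
  obtain ⟨n, hn⟩ := hfin.infinite_compl.nonempty
  exact ⟨n, not_not.mp hn⟩

lemma U_open : IsOpen {h : IN | ∀ x, (x, 0) ∉ h.1} :=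
  TopologicalSpace.GenerateOpen.basic _ (Or.inr ⟨0, rfl⟩)

/-- The symmetric inverse monoid `I_ℕ` with its canonical topology does not
embed topologically into `ℕ^ℕ` (functions under left-to-right composition,
product topology); equivalently, there is no countable family of right
congruences on `I_ℕ`, each with countably many classes, whose equivalence
classes form a basis of the canonical topology. -/
theorem IN_does_not_embed_into_NN :
    (¬ ∃ φ : IN → (ℕ → ℕ), (∀ a b : IN, φ (a * b) = φ b ∘ φ a) ∧
        Topology.IsEmbedding φ) ∧
    (¬ ∃ ρ : ℕ → (IN → IN → Prop),
        (∀ i, Equivalence (ρ i)) ∧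
        (∀ i, ∀ x y z : IN, ρ i x y → ρ i (x * z) (y * z)) ∧
        (∀ i, ∃ f : IN → ℕ, ∀ x y : IN, ρ i x y ↔ f x = f y) ∧
        TopologicalSpace.IsTopologicalBasis
          {s : Set IN | ∃ i : ℕ, ∃ x : IN, s = {y : IN | ρ i x y}}) := by
  have hEU : emptyIN ∈ {h : IN | ∀ x, (x, 0) ∉ h.1} := fun x h => h.elim
  constructor
  · rintro ⟨φ, hcomp, hemb⟩
    obtain ⟨V, hVopen, hVpre⟩ := hemb.toIsInducing.isOpen_iff.mp U_open
    have hpEV : φ emptyIN ∈ V := by rw [← hVpre] at hEU; exact hEU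
    obtain ⟨I, u, hIu, hpi⟩ := isOpen_pi_iff.mp hVopen _ hpEV
    -- shrink to an exact cylinder
    set C : Set (ℕ → ℕ) := (I : Set ℕ).pi (fun i => {φ emptyIN i}) with hC
    have hCopen : IsOpen C :=
      isOpen_set_pi I.finite_toSet fun i _ => isOpen_discrete _
    have hWopen : IsOpen (φ ⁻¹' C) := hCopen.preimage hemb.continuous
    have hEW : emptyIN ∈ φ ⁻¹' C := fun i _ => rfl
    obtain ⟨n, hn⟩ := key' _ hWopen hEW
    have hz : zIN n ∈ {h : IN | ∀ x, (x, 0) ∉ h.1} := by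
      rw [← hVpre]
      apply hpi
      intro i hi
      have h1 : φ (eIN n) i = φ emptyIN i := hn i hi
      have e1 : φ (zIN n) = φ (zIN n) ∘ φ (eIN n) := by rw [← hcomp, e_mul_z]
      have e2 : φ emptyIN = φ (zIN n) ∘ φ emptyIN := by rw [← hcomp, empty_mul]
      have h2 : φ (zIN n) i = φ emptyIN i := by
        calc φ (zIN n) i = φ (zIN n) (φ (eIN n) i) := congrFun e1 i
          _ = φ (zIN n) (φ emptyIN i) := by rw [h1]
          _ = φ emptyIN i := (congrFun e2 i).symm
      rw [h2]
      exact (hIu i hi).2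
    exact hz n rfl
  · rintro ⟨ρ, hequiv, hrc, -, hbasis⟩
    obtain ⟨B, ⟨i, x, rfl⟩, hmemB, hBU⟩ :=
      hbasis.exists_subset_of_mem_open hEU U_open
    have hBopen : IsOpen {y : IN | ρ i x y} := hbasis.isOpen ⟨i, x, rfl⟩
    obtain ⟨n, hn⟩ := key' _ hBopen hmemB
    have h1 : ρ i emptyIN (eIN n) := (hequiv i).trans ((hequiv i).symm hmemB) hn
    have h2 : ρ i (emptyIN * zIN n) (eIN n * zIN n) := hrc i _ _ _ h1
    rw [empty_mul, e_mul_z] at h2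
    have h3 : ρ i x (zIN n) := (hequiv i).trans hmemB h2
    exact hBU h3 n rfl
end

section
/- Let X = {0} ∪ {1/(n+1) : n ∈ ℕ} with the semilattice operation min, endowed with the topology in which every nonzero element is isolated and the sets U_m = {1/(2n+1) : n ≥ m} ∪ {0} form a neighborhood basis at 0. Then there is no countable family of congruences on X, each with countably many classes, whose classes form a basis of this topology; consequently X does not embed topologically into ℕ^ℕ. -/
/-- The carrier set `{0} ∪ {1/(n+1) : n ∈ ℕ} ⊆ ℝ`. -/
def Xcarrier : Set ℝ := {x | x = 0 ∨ ∃ n : ℕ, x = 1 / ((n : ℝ) + 1)}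

/-- The semilattice `X = {0} ∪ {1/(n+1) : n ∈ ℕ}` with operation `min`. -/
def Xsl : Type := {x : ℝ // x ∈ Xcarrier}

noncomputable instance : Mul Xsl :=
  ⟨fun a b => ⟨min a.1 b.1, by
    rcases min_choice a.1 b.1 with h | h <;> rw [h]
    · exact a.2
    · exact b.2⟩⟩

/-- The topology on `X` in which every nonzero element is isolated and the sets
`U_m = {1/(2n+1) : n ≥ m} ∪ {0}` form a neighborhood basis at `0`. -/
instance : TopologicalSpace Xsl :=
  TopologicalSpace.generateFrom
    ({A | ∃ x : Xsl, x.1 ≠ 0 ∧ A = {x}} ∪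
     {A | ∃ m : ℕ, A = {x : Xsl | x.1 = 0 ∨ ∃ n : ℕ, m ≤ n ∧ x.1 = 1 / (2 * (n : ℝ) + 1)}})

namespace XslAux

open TopologicalSpace

noncomputable def e (n : ℕ) : Xsl := ⟨1 / ((n : ℝ) + 1), Or.inr ⟨n, rfl⟩⟩

def z : Xsl := ⟨0, Or.inl rfl⟩

def U (m : ℕ) : Set Xsl :=
  {x : Xsl | x.1 = 0 ∨ ∃ n : ℕ, m ≤ n ∧ x.1 = 1 / (2 * (n : ℝ) + 1)}

lemma val_nonneg (x : Xsl) : 0 ≤ x.1 := by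
  rcases x.2 with h | ⟨n, h⟩ <;> rw [h]
  · positivity

lemma mul_val (a b : Xsl) : (a * b).1 = min a.1 b.1 := rfl

lemma mul_comm' (a b : Xsl) : a * b = b * a := Subtype.ext (min_comm _ _)

lemma odd_ne (m n : ℕ) : (1 : ℝ) / (2 * (m : ℝ) + 2) ≠ 1 / (2 * (n : ℝ) + 1) := by
  intro h
  have h1 : (2 * (m : ℝ) + 2) ≠ 0 := by positivity
  have h2 : (2 * (n : ℝ) + 1) ≠ 0 := by positivity
  rw [div_eq_div_iff h1 h2, one_mul, one_mul] at h
  have : 2 * n + 1 = 2 * m + 2 := by exact_mod_cast h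
  omega

lemma U_mono {m m' : ℕ} (h : m ≤ m') : U m' ⊆ U m := by
  rintro x (hx | ⟨n, hn, hx⟩)
  · exact Or.inl hx
  · exact Or.inr ⟨n, le_trans h hn, hx⟩

lemma open_nhds_zero {V : Set Xsl} (hV : IsOpen V) (hz : z ∈ V) : ∃ m, U m ⊆ V := by
  have hV' : TopologicalSpace.GenerateOpen
      ({A | ∃ x : Xsl, x.1 ≠ 0 ∧ A = {x}} ∪
       {A | ∃ m : ℕ, A = {x : Xsl | x.1 = 0 ∨ ∃ n : ℕ, m ≤ n ∧ x.1 = 1 / (2 * (n : ℝ) + 1)}})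
      V := hV
  clear hV
  induction hV' with
  | basic A hA =>
      rcases hA with ⟨x, hx0, rfl⟩ | ⟨m, rfl⟩
      · exact absurd (congrArg Subtype.val hz).symm hx0
      · exact ⟨m, fun y hy => hy⟩
  | univ => exact ⟨0, fun y _ => trivial⟩
  | inter V W hV hW ihV ihW =>
      obtain ⟨m, hm⟩ := ihV hz.1
      obtain ⟨m', hm'⟩ := ihW hz.2
      exact ⟨max m m', fun y hy =>
        ⟨hm (U_mono (le_max_left _ _) hy), hm' (U_mono (le_max_right _ _) hy)⟩⟩
  | sUnion S hS ih =>
      obtain ⟨s, hsS, hzs⟩ := hz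
      obtain ⟨m, hm⟩ := ih s hsS hzs
      exact ⟨m, fun y hy => ⟨s, hsS, hm hy⟩⟩

lemma part1 :
    ¬ ∃ ρ : ℕ → (Xsl → Xsl → Prop),
        (∀ i, Equivalence (ρ i)) ∧
        (∀ i, ∀ x y z : Xsl, ρ i x y → ρ i (x * z) (y * z) ∧ ρ i (z * x) (z * y)) ∧
        (∀ i, ∃ f : Xsl → ℕ, ∀ x y : Xsl, ρ i x y ↔ f x = f y) ∧
        TopologicalSpace.IsTopologicalBasis
          {s : Set Xsl | ∃ i : ℕ, ∃ x : Xsl, s = {y : Xsl | ρ i x y}} := by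
  rintro ⟨ρ, hEq, hCong, -, hBasis⟩
  have hU0 : IsOpen (U 0) :=
    TopologicalSpace.GenerateOpen.basic _ (Or.inr ⟨0, rfl⟩)
  have hzU0 : z ∈ U 0 := Or.inl rfl
  obtain ⟨s, hsB, hzs, hsub⟩ := hBasis.exists_subset_of_mem_open hzU0 hU0
  obtain ⟨i, x, rfl⟩ := hsB
  have hopen : IsOpen {y | ρ i x y} := hBasis.isOpen ⟨i, x, rfl⟩
  obtain ⟨m, hm⟩ := open_nhds_zero hopen hzs
  have ha : e (2 * m) ∈ U m := by
    refine Or.inr ⟨m, le_refl m, ?_⟩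
    show (1 : ℝ) / ((((2 * m : ℕ)) : ℝ) + 1) = 1 / (2 * (m : ℝ) + 1)
    push_cast; ring_nf
  have hρa : ρ i x (e (2 * m)) := hm ha
  have h1 : ρ i z (e (2 * m)) := (hEq i).trans ((hEq i).symm hzs) hρa
  have h2 := (hCong i z (e (2 * m)) (e (2 * m + 1)) h1).1
  have hz' : z * e (2 * m + 1) = z :=
    Subtype.ext (min_eq_left (val_nonneg _))
  have hle : (e (2 * m + 1)).1 ≤ (e (2 * m)).1 := by
    show (1 : ℝ) / (((2 * m + 1 : ℕ) : ℝ) + 1) ≤ 1 / (((2 * m : ℕ) : ℝ) + 1)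
    apply one_div_le_one_div_of_le
    · positivity
    · push_cast; linarith
  have hab : e (2 * m) * e (2 * m + 1) = e (2 * m + 1) :=
    Subtype.ext (min_eq_right hle)
  rw [hz', hab] at h2
  have h3 : ρ i x (e (2 * m + 1)) := (hEq i).trans hzs h2
  rcases hsub h3 with h | ⟨n, -, hn⟩
  · have : (1 : ℝ) / (((2 * m + 1 : ℕ) : ℝ) + 1) = 0 := h
    have hpos : (0 : ℝ) < 1 / (((2 * m + 1 : ℕ) : ℝ) + 1) := by positivity
    linarith
  · have : (1 : ℝ) / (2 * (m : ℝ) + 2) = 1 / (2 * (n : ℝ) + 1) := by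
      have he : (e (2 * m + 1)).1 = (1 : ℝ) / (2 * (m : ℝ) + 2) := by
        show (1 : ℝ) / (((2 * m + 1 : ℕ) : ℝ) + 1) = _
        push_cast; ring_nf
      rw [← he]; exact hn
    exact odd_ne m n this

end XslAux

/-- There is no countable family of congruences on `X`, each with countably
many classes, whose classes form a basis of the topology; consequently `X` does
not embed topologically into `ℕ^ℕ` (functions under left-to-right composition,
product topology). -/
theorem Xsl_no_congruence_basis_and_no_embedding :
    (¬ ∃ ρ : ℕ → (Xsl → Xsl → Prop),
        (∀ i, Equivalence (ρ i)) ∧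
        (∀ i, ∀ x y z : Xsl, ρ i x y → ρ i (x * z) (y * z) ∧ ρ i (z * x) (z * y)) ∧
        (∀ i, ∃ f : Xsl → ℕ, ∀ x y : Xsl, ρ i x y ↔ f x = f y) ∧
        TopologicalSpace.IsTopologicalBasis
          {s : Set Xsl | ∃ i : ℕ, ∃ x : Xsl, s = {y : Xsl | ρ i x y}}) ∧
    (¬ ∃ φ : Xsl → (ℕ → ℕ), (∀ a b : Xsl, φ (a * b) = φ b ∘ φ a) ∧
        Topology.IsEmbedding φ) := by
  refine ⟨XslAux.part1, ?_⟩
  rintro ⟨φ, hmul, hemb⟩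
  apply XslAux.part1
  refine ⟨fun k x y => ∀ i ∈ (Denumerable.ofNat (List ℕ) k), φ x i = φ y i,
    ?_, ?_, ?_, ?_⟩
  · exact fun k => ⟨fun x i _ => rfl, fun h i hi => (h i hi).symm,
      fun h h' i hi => (h i hi).trans (h' i hi)⟩
  · intro k x y w h
    have key : ∀ i ∈ (Denumerable.ofNat (List ℕ) k), φ (x * w) i = φ (y * w) i := by
      intro i hi
      rw [hmul, hmul]
      simp only [Function.comp_apply, h i hi]
    refine ⟨key, ?_⟩
    rw [XslAux.mul_comm' w x, XslAux.mul_comm' w y]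
    exact key
  · intro k
    refine ⟨fun x => Encodable.encode ((Denumerable.ofNat (List ℕ) k).map (φ x)),
      fun x y => ⟨fun h => ?_, fun h i hi => ?_⟩⟩
    · exact congrArg Encodable.encode (List.map_inj_left.mpr h)
    · exact List.map_inj_left.mp (Encodable.encode_injective h) i hi
  · apply TopologicalSpace.isTopologicalBasis_of_isOpen_of_nhds
    · rintro s ⟨k, x, rfl⟩
      have hset : {y : Xsl | ∀ i ∈ (Denumerable.ofNat (List ℕ) k), φ x i = φ y i} =
          ⋂ i ∈ (Denumerable.ofNat (List ℕ) k), (fun y : Xsl => φ y i) ⁻¹' {φ x i} := by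
        ext y
        simp only [Set.mem_setOf_eq, Set.mem_iInter, Set.mem_preimage,
          Set.mem_singleton_iff]
        exact ⟨fun h i hi => (h i hi).symm, fun h i hi => (h i hi).symm⟩
      rw [hset]
      refine (List.finite_toSet _).isOpen_biInter fun i _ => ?_
      exact IsOpen.preimage ((continuous_apply i).comp hemb.continuous)
        (isOpen_discrete _)
    · intro x V hxV hV
      obtain ⟨W, hW, hWV⟩ := hemb.isInducing.isOpen_iff.mp hV
      have hxW : φ x ∈ W := by rw [← hWV] at hxV; exact hxV
      obtain ⟨I, u, hu, hsub⟩ := isOpen_pi_iff.mp hW (φ x) hxW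
      refine ⟨{y : Xsl | ∀ i ∈ (Denumerable.ofNat (List ℕ)
          (Encodable.encode I.toList)), φ x i = φ y i},
        ⟨Encodable.encode I.toList, x, rfl⟩, ?_, ?_⟩
      · intro i _; rfl
      · intro y hy
        simp only [Set.mem_setOf_eq, Denumerable.ofNat_encode] at hy
        rw [← hWV]
        apply hsub
        intro i hi
        rw [← hy i (Finset.mem_toList.mpr hi)]
        exact (hu i hi).2
end

section
/- Let T = {0} ∪ {x_n : n ∈ ℕ} be the semilattice with ab = a if a = b and ab = 0 otherwise, and let S = T × {1,−1} with coordinatewise multiplication (second coordinate in the two-element group). Endow S with the topology in which every point except (0,1) is isolated and the sets U_n = {(0,1)} ∪ {(x_i,1) : i ≥ n} form a neighborhood basis at (0,1). Then there is no countable family of congruences on S, each with countably many classes, whose classes form a basis of this topology. -/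
/-- The semigroup `S = T × {1,-1}` where `T = {0} ∪ {xₙ : n ∈ ℕ}` is the
semilattice with `a * b = a` if `a = b` and `a * b = 0` otherwise, and the
second coordinate lies in the two-element group (modelled as `Bool` under
`xor`).  Here `T` is modelled as `Option ℕ` with `none` as `0`, and the point
`(0, 1)` corresponds to `(none, false)`. -/
def S13 : Type := Option ℕ × Bool

instance : Mul S13 :=
  ⟨fun p q => (if p.1 = q.1 then p.1 else none, xor p.2 q.2)⟩

/-- The topology in which every point except `(0,1) = (none, false)` is
isolated and the sets `Uₙ = {(0,1)} ∪ {(xᵢ,1) : i ≥ n}` form a neighborhood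
basis at `(0,1)`. -/
instance : TopologicalSpace S13 :=
  TopologicalSpace.generateFrom
    ({A | ∃ p : S13, p ≠ (none, false) ∧ A = {p}} ∪
     {A | ∃ n : ℕ, A = {p : S13 | p = (none, false) ∨
        ∃ i : ℕ, n ≤ i ∧ p = (some i, false)}})

/-- Any open set containing `(none, false)` contains `(some k, false)` for
all large `k`. -/
lemma S13_open_mem (U : Set S13) (hU : IsOpen U) :
    (none, false) ∈ U → ∃ n : ℕ, ∀ i : ℕ, n ≤ i → ((some i, false) : S13) ∈ U := by
  induction hU with
  | basic A hA =>
      intro hm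
      rcases hA with ⟨p, hp, rfl⟩ | ⟨n, rfl⟩
      · exact absurd hm.symm hp
      · exact ⟨n, fun i hi => Or.inr ⟨i, hi, rfl⟩⟩
  | univ => exact fun _ => ⟨0, fun i _ => trivial⟩
  | inter A B _ _ ihA ihB =>
      intro hm
      obtain ⟨n, hn⟩ := ihA hm.1
      obtain ⟨m, hm'⟩ := ihB hm.2
      exact ⟨max n m, fun i hi => ⟨hn i (le_trans (le_max_left _ _) hi),
        hm' i (le_trans (le_max_right _ _) hi)⟩⟩
  | sUnion 𝒮 _ ih =>
      intro hm
      obtain ⟨A, hA, hmA⟩ := hm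
      obtain ⟨n, hn⟩ := ih A hA hmA
      exact ⟨n, fun i hi => ⟨A, hA, hn i hi⟩⟩

lemma S13_mul_eq (a b : S13) :
    a * b = ((if a.1 = b.1 then a.1 else none, xor a.2 b.2) : S13) := rfl

/-- There is no countable family of congruences on `S`, each with countably
many classes, whose classes form a basis of this topology. -/
theorem S13_no_congruence_basis :
    ¬ ∃ ρ : ℕ → (S13 → S13 → Prop),
        (∀ i, Equivalence (ρ i)) ∧
        (∀ i, ∀ x y z : S13, ρ i x y → ρ i (x * z) (y * z) ∧ ρ i (z * x) (z * y)) ∧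
        (∀ i, ∃ f : S13 → ℕ, ∀ x y : S13, ρ i x y ↔ f x = f y) ∧
        TopologicalSpace.IsTopologicalBasis
          {s : Set S13 | ∃ i : ℕ, ∃ x : S13, s = {y : S13 | ρ i x y}} := by
  rintro ⟨ρ, hequiv, hcong, _, hbasis⟩
  -- `{(none, true)}` is open
  have hsingle : IsOpen ({((none : Option ℕ), true)} : Set S13) := by
    apply TopologicalSpace.GenerateOpen.basic
    exact Or.inl ⟨(none, true), fun h => by simpa using congrArg Prod.snd h, rfl⟩
  -- get a basis element at `(none, true)` inside the singleton
  obtain ⟨s, hs, hmem, hsub⟩ :=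
    hbasis.exists_subset_of_mem_open (show ((none, true) : S13) ∈ ({((none : Option ℕ), true)} : Set S13) from rfl) hsingle
  obtain ⟨j, x, rfl⟩ := hs
  -- the class of `(none, false)` under `ρ j` is open
  have hclass : IsOpen {y : S13 | ρ j (none, false) y} :=
    hbasis.isOpen ⟨j, (none, false), rfl⟩
  obtain ⟨n, hn⟩ := S13_open_mem _ hclass ((hequiv j).refl _)
  have hrel : ρ j (none, false) (some n, false) := hn n le_rfl
  -- multiply by `(some n, true)`
  have key : ∀ x y z : S13, ρ j x y → ρ j (x * z) (y * z) := fun x y z h => (hcong j x y z h).1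
  have h := key _ _ ((some n, true) : S13) hrel
  erw [S13_mul_eq, S13_mul_eq] at h
  simp only [if_pos rfl] at h
  have this : ρ j ((none, true) : S13) ((some n, true) : S13) := by
    exact h
  -- so `(some n, true)` lies in the class of `(none, true)` under `ρ j`,
  -- which is the singleton `{(none, true)}`
  have hx1 : ρ j x (none, true) := hmem
  have hx2 : ρ j x (some n, true) := (hequiv j).trans hx1 this
  have : ((some n, true) : S13) ∈ ({((none : Option ℕ), true)} : Set S13) := hsub hx2
  simpa using congrArg Prod.fst (Set.mem_singleton_iff.mp this)
end

section
/- For any topological semigroup S that embeds topologically into ℕ^ℕ, the monoid S¹ obtained by adjoining an isolated external identity also embeds topologically into ℕ^ℕ, and the semigroup S⁰ obtained by adjoining an isolated external zero also embeds topologically into ℕ^ℕ. -/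
open Topology

/-- Embed `ℕ^ℕ` into itself by acting on even numbers, sending odds to `1`. -/
private def iotaNN (f : ℕ → ℕ) : ℕ → ℕ := fun n => if n % 2 = 0 then 2 * f (n / 2) else 1

private lemma iotaNN_comp (f g : ℕ → ℕ) : iotaNN (g ∘ f) = iotaNN g ∘ iotaNN f := by
  funext n
  simp only [iotaNN, Function.comp_apply]
  split
  · simp [Nat.mul_div_cancel_left, Nat.mul_mod_right]
  · simp

private lemma iotaNN_odd (f : ℕ → ℕ) : iotaNN f 3 = 1 := by simp [iotaNN]

private lemma iotaNN_zero (f : ℕ → ℕ) : iotaNN f 0 = 2 * f 0 := by simp [iotaNN]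

private lemma iotaNN_continuous : Continuous iotaNN := by
  refine continuous_pi fun n => ?_
  simp only [iotaNN]
  split
  · exact continuous_const.mul (continuous_apply _)
  · exact continuous_const

private lemma iotaNN_inducing : Topology.IsInducing iotaNN := by
  have hr : Continuous (fun g : ℕ → ℕ => fun k => g (2 * k) / 2) := by
    refine continuous_pi fun k => ?_
    exact (continuous_of_discreteTopology (f := fun m : ℕ => m / 2)).comp (continuous_apply _)
  refine Topology.IsInducing.of_comp iotaNN_continuous hr ?_
  have : (fun g : ℕ → ℕ => fun k => g (2 * k) / 2) ∘ iotaNN = id := by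
    funext f k
    simp [iotaNN, Nat.mul_div_cancel_left, Nat.mul_mod_right]
  rw [this]
  exact Topology.IsInducing.id

private lemma iotaNN_injective : Function.Injective iotaNN := by
  intro f g hfg
  funext k
  have := congrFun hfg (2 * k)
  simp [iotaNN, Nat.mul_div_cancel_left, Nat.mul_mod_right] at this
  exact this

/-- Key abstract lemma: adjoining an isolated extra point whose image is `E`,
separated from the `iotaNN`-image by the value at coordinate `k`. -/
private lemma key_embed {S : Type*} [TopologicalSpace S] {X : Type*}
    (φ : S → (ℕ → ℕ)) (he : Topology.IsEmbedding φ)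
    (j : S → X) (hjinj : Function.Injective j) (e : X)
    (hsurj : ∀ x : X, x = e ∨ ∃ s, x = j s)
    (ψ : X → (ℕ → ℕ)) (hψj : ∀ s, ψ (j s) = iotaNN (φ s)) (E : ℕ → ℕ) (hψe : ψ e = E)
    (k v : ℕ) (hEk : E k = v) (hik : ∀ f, iotaNN f k ≠ v) :
    @Topology.IsEmbedding X (ℕ → ℕ) (TopologicalSpace.coinduced j ‹_›) _ ψ := by
  letI tX : TopologicalSpace X := TopologicalSpace.coinduced j ‹_›
  have hinj : Function.Injective ψ := by
    intro x y hxy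
    rcases hsurj x with rfl | ⟨s, rfl⟩ <;> rcases hsurj y with rfl | ⟨t, rfl⟩
    · rfl
    · rw [hψe, hψj] at hxy
      exact absurd (hxy ▸ hEk) (hik (φ t))
    · rw [hψe, hψj] at hxy
      exact absurd (hxy ▸ hEk) (hik (φ s))
    · exact congrArg j (he.injective (iotaNN_injective (by rwa [hψj, hψj] at hxy)))
  have hcont : Continuous ψ := by
    rw [continuous_coinduced_dom (f := j)]
    have : ψ ∘ j = iotaNN ∘ φ := by funext s; simp [hψj]
    rw [this]
    exact iotaNN_continuous.comp he.continuous
  refine ⟨⟨le_antisymm hcont.le_induced ?_⟩, hinj⟩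
  -- every coinduced-open set is a `ψ`-preimage of an open set
  intro A hA
  rw [isOpen_coinduced] at hA
  obtain ⟨V, hVopen, hVeq⟩ := he.isOpen_iff.mp hA
  obtain ⟨V', hV'open, hV'eq⟩ := iotaNN_inducing.isOpen_iff.mp hVopen
  classical
  set W : Set (ℕ → ℕ) :=
    (V' ∩ {g | g k ≠ v}) ∪ (if e ∈ A then {g | g k = v} else ∅) with hW
  have hWopen : IsOpen W := by
    refine IsOpen.union (hV'open.inter ?_) ?_
    · exact isOpen_ne_fun (continuous_apply k) continuous_const
    · split
      · have heq : {g : ℕ → ℕ | g k = v} = (fun g : ℕ → ℕ => g k) ⁻¹' {v} := rfl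
        rw [heq]
        exact (continuous_apply k).isOpen_preimage _ (isOpen_discrete _)
      · exact isOpen_empty
  refine isOpen_induced_iff.mpr ⟨W, hWopen, ?_⟩
  ext x
  rcases hsurj x with hx | ⟨s, rfl⟩
  · subst hx
    simp only [Set.mem_preimage, hψe, hW, Set.mem_union, Set.mem_inter_iff, Set.mem_setOf_eq]
    constructor
    · rintro (⟨-, hne⟩ | hmem)
      · exact absurd hEk hne
      · by_cases hA' : x ∈ A
        · exact hA'
        · simp [hA'] at hmem
    · intro hA'
      right
      simp [hA', hEk]
  · simp only [Set.mem_preimage, hψj, hW, Set.mem_union, Set.mem_inter_iff, Set.mem_setOf_eq]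
    have h1 : iotaNN (φ s) k ≠ v := hik (φ s)
    have h2 : iotaNN (φ s) ∈ (if e ∈ A then {g : ℕ → ℕ | g k = v} else ∅) ↔ False := by
      split <;> simp [h1]
    have h3 : iotaNN (φ s) ∈ V' ↔ j s ∈ A := by
      constructor
      · intro hmem
        have : s ∈ φ ⁻¹' V := by
          rw [← hV'eq]; exact hmem
        rw [hVeq] at this; exact this
      · intro hmem
        have : s ∈ φ ⁻¹' V := by rw [hVeq]; exact hmem
        rw [← hV'eq] at this; exact this
    constructor
    · rintro (⟨hmem, -⟩ | hmem)
      · exact h3.mp hmem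
      · exact absurd hmem (by simpa using h2)
    · intro hmem
      exact Or.inl ⟨h3.mpr hmem, h1⟩

/-- If a topological semigroup `S` embeds topologically into `ℕ^ℕ` (functions
under left-to-right composition, product topology), then so do the monoid `S¹`
obtained by adjoining an isolated external identity and the semigroup `S⁰`
obtained by adjoining an isolated external zero.  The topology on `WithOne S`
(resp. `WithZero S`) is the one making the new point isolated and `S` an open
subspace with its original topology, i.e. the topology coinduced by the
coercion. -/
theorem adjoin_identity_or_zero_embeds_in_NN
    (S : Type*) [Semigroup S] [TopologicalSpace S] [ContinuousMul S]
    (h : ∃ φ : S → (ℕ → ℕ), (∀ a b : S, φ (a * b) = φ b ∘ φ a) ∧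
      Topology.IsEmbedding φ) :
    (letI : TopologicalSpace (WithOne S) :=
        TopologicalSpace.coinduced (fun s : S => (s : WithOne S)) ‹_›
      ∃ ψ : WithOne S → (ℕ → ℕ),
        (∀ a b : WithOne S, ψ (a * b) = ψ b ∘ ψ a) ∧ Topology.IsEmbedding ψ) ∧
    (letI : TopologicalSpace (WithZero S) :=
        TopologicalSpace.coinduced (fun s : S => (s : WithZero S)) ‹_›
      ∃ ψ : WithZero S → (ℕ → ℕ),
        (∀ a b : WithZero S, ψ (a * b) = ψ b ∘ ψ a) ∧ Topology.IsEmbedding ψ) := by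
  obtain ⟨φ, hφm, hφe⟩ := h
  constructor
  · -- WithOne
    letI : TopologicalSpace (WithOne S) :=
      TopologicalSpace.coinduced (fun s : S => (s : WithOne S)) ‹_›
    set ψ : WithOne S → (ℕ → ℕ) :=
      WithOne.recOneCoe (id : ℕ → ℕ) (fun s => iotaNN (φ s)) with hψ
    have hψ1 : ψ 1 = id := rfl
    have hψc : ∀ s : S, ψ (s : WithOne S) = iotaNN (φ s) := fun s => rfl
    refine ⟨ψ, ?_, ?_⟩
    · intro a b
      induction a using WithOne.cases_on <;> induction b using WithOne.cases_on
      · rw [one_mul]; rfl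
      · next s => intro s; rw [one_mul]; rfl
      · next s => intro s; rw [mul_one]; rfl
      · next s t =>
        intro t s
        rw [← WithOne.coe_mul, hψc, hψc, hψc, hφm, iotaNN_comp]
    · exact key_embed φ hφe (fun s : S => (s : WithOne S))
        (fun a b hab => WithOne.coe_inj.mp hab) 1
        (fun x => WithOne.cases_on x (Or.inl rfl) (fun s => Or.inr ⟨s, rfl⟩))
        ψ hψc id hψ1 3 3 rfl (fun f => by rw [iotaNN_odd]; omega)
  · -- WithZero
    letI : TopologicalSpace (WithZero S) :=
      TopologicalSpace.coinduced (fun s : S => (s : WithZero S)) ‹_›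
    set ψ : WithZero S → (ℕ → ℕ) :=
      WithZero.recZeroCoe (fun _ => 1 : ℕ → ℕ) (fun s => iotaNN (φ s)) with hψ
    have hψ0 : ψ 0 = fun _ => 1 := rfl
    have hψc : ∀ s : S, ψ (s : WithZero S) = iotaNN (φ s) := fun s => rfl
    refine ⟨ψ, ?_, ?_⟩
    · intro a b
      induction a using WithZero.cases_on <;> induction b using WithZero.cases_on
      · rw [mul_zero]; rfl
      · next s =>
        intro s
        rw [zero_mul, hψ0, hψc]
        funext n; simp [iotaNN]
      · next s => intro s; rw [mul_zero]; rfl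
      · next s t =>
        intro t s
        rw [← WithZero.coe_mul, hψc, hψc, hψc, hφm, iotaNN_comp]
    · exact key_embed φ hφe (fun s : S => (s : WithZero S))
        (fun a b hab => WithZero.coe_inj.mp hab) 0
        (fun x => WithZero.cases_on x (Or.inl rfl) (fun s => Or.inr ⟨s, rfl⟩))
        ψ hψc (fun _ => 1) hψ0 0 1 rfl (fun f => by rw [iotaNN_zero]; omega)
end

section
/- If S_n, for n ∈ ℕ, are topological semigroups each topologically isomorphic to a subsemigroup of ℕ^ℕ, then the Tychonoff product ∏_{n∈ℕ} S_n embeds topologically into ℕ^ℕ. -/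
open Topology

/-- Pulling back the discrete topology on `ℕ` along an injective map gives the
discrete topology. -/
lemma aux_induced_discrete {j : ℕ → ℕ} (hj : Function.Injective j) :
    TopologicalSpace.induced j instTopologicalSpaceNat = instTopologicalSpaceNat := by
  have : TopologicalSpace.induced j instTopologicalSpaceNat = (⊥ : TopologicalSpace ℕ) := by
    refine eq_bot_of_singletons_open fun m => ?_
    have : ({m} : Set ℕ) = j ⁻¹' {j m} := by
      ext x; simp [hj.eq_iff]
    rw [this]
    exact ⟨{j m}, isOpen_discrete _, rfl⟩
  rw [this]; rfl

/-- A product of embeddings is an embedding. -/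
lemma aux_isEmbedding_piMap {ι : Type*} {X Y : ι → Type*} [∀ i, TopologicalSpace (X i)]
    [∀ i, TopologicalSpace (Y i)] {f : ∀ i, X i → Y i} (hf : ∀ i, Topology.IsEmbedding (f i)) :
    Topology.IsEmbedding (fun x i => f i (x i) : (∀ i, X i) → ∀ i, Y i) := by
  refine ⟨⟨?_⟩, fun a b hab => funext fun i => (hf i).injective (congrFun hab i)⟩
  simp only [Pi.topologicalSpace, induced_iInf, induced_compose]
  refine iInf_congr fun i => ?_
  have : ((fun g : ∀ i, Y i => g i) ∘ fun x i => f i (x i)) = f i ∘ fun x : ∀ i, X i => x i := rfl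
  rw [this, ← induced_compose, ← (hf i).isInducing.eq_induced]

/-- "Uncurrying along the pairing bijection" embeds `(ℕ → ℕ → ℕ)` into `ℕ → ℕ`. -/
lemma aux_isEmbedding_H :
    Topology.IsEmbedding (fun (g : ℕ → ℕ → ℕ) (k : ℕ) =>
      g (Nat.pairEquiv.symm k).1 (Nat.pairEquiv.symm k).2) := by
  refine ⟨⟨?_⟩, ?_⟩
  · simp only [Pi.topologicalSpace, induced_iInf, induced_compose]
    have key : ∀ k : ℕ,
        TopologicalSpace.induced
          ((fun f : ℕ → ℕ => f k) ∘ fun (g : ℕ → ℕ → ℕ) (k : ℕ) =>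
            g (Nat.pairEquiv.symm k).1 (Nat.pairEquiv.symm k).2) instTopologicalSpaceNat
        = (fun p : ℕ × ℕ => TopologicalSpace.induced
            (fun g : ℕ → ℕ → ℕ => g p.1 p.2) instTopologicalSpaceNat)
            (Nat.pairEquiv.symm k) := fun k => rfl
    rw [iInf_congr key, Nat.pairEquiv.symm.iInf_comp
      (g := fun p : ℕ × ℕ => TopologicalSpace.induced
        (fun g : ℕ → ℕ → ℕ => g p.1 p.2) instTopologicalSpaceNat), iInf_prod]
    exact iInf_congr fun n => iInf_congr fun m => rfl
  · intro a b hab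
    funext n m
    have := congrFun hab (Nat.pairEquiv (n, m))
    simpa using this

/-- Re-encoding each value into its own block is an embedding of `ℕ → ℕ` into itself. -/
lemma aux_isEmbedding_T :
    Topology.IsEmbedding (fun (g : ℕ → ℕ) (k : ℕ) =>
      Nat.pairEquiv ((Nat.pairEquiv.symm k).1, g k)) := by
  refine ⟨⟨?_⟩, ?_⟩
  · simp only [Pi.topologicalSpace, induced_iInf, induced_compose]
    refine iInf_congr fun k => ?_
    have : ((fun f : ℕ → ℕ => f k) ∘ fun (g : ℕ → ℕ) (k : ℕ) =>
          Nat.pairEquiv ((Nat.pairEquiv.symm k).1, g k))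
        = (fun m => Nat.pairEquiv ((Nat.pairEquiv.symm k).1, m)) ∘ fun g : ℕ → ℕ => g k := rfl
    rw [this, ← induced_compose, aux_induced_discrete]
    intro x y hxy
    have := Nat.pairEquiv.injective hxy
    exact (Prod.mk.injEq _ _ _ _ ▸ this).2
  · intro a b hab
    funext k
    have := congrFun hab k
    have := Nat.pairEquiv.injective this
    exact (Prod.mk.injEq _ _ _ _ ▸ this).2

/-- If `S n`, `n ∈ ℕ`, are topological semigroups each topologically isomorphic
to a subsemigroup of `ℕ^ℕ` (functions under left-to-right composition, product
topology), then the Tychonoff product `∏ n, S n` embeds topologically into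
`ℕ^ℕ`. -/
theorem pi_embeds_in_NN_of_each_embeds
    (S : ℕ → Type*) [∀ n, Semigroup (S n)] [∀ n, TopologicalSpace (S n)]
    (h : ∀ n, ∃ φ : S n → (ℕ → ℕ), (∀ a b : S n, φ (a * b) = φ b ∘ φ a) ∧
      Topology.IsEmbedding φ) :
    ∃ Φ : (∀ n, S n) → (ℕ → ℕ),
      (∀ a b : ∀ n, S n, Φ (a * b) = Φ b ∘ Φ a) ∧ Topology.IsEmbedding Φ := by
  choose φ hmul hemb using h
  refine ⟨fun x k => Nat.pairEquiv ((Nat.pairEquiv.symm k).1,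
      φ (Nat.pairEquiv.symm k).1 (x (Nat.pairEquiv.symm k).1) (Nat.pairEquiv.symm k).2),
    ?_, ?_⟩
  · intro a b
    funext k
    have hab : (a * b) (Nat.pairEquiv.symm k).1
        = a (Nat.pairEquiv.symm k).1 * b (Nat.pairEquiv.symm k).1 := rfl
    simp only [Function.comp_apply, hab, hmul, Equiv.symm_apply_apply,
      Function.comp_apply]
    rw [Equiv.symm_apply_apply]
  · exact aux_isEmbedding_T.comp (aux_isEmbedding_H.comp (aux_isEmbedding_piMap hemb))
end

section
/- The topological inverse semigroup I_ℕ is weakly ditopological: for every f ∈ I_ℕ and every open neighborhood O of f there exist open neighborhoods U of f, V of f⁻¹f, and W of ff⁻¹ such that {s : ∃ b ∈ U, ∃ idempotent e ∈ W with b = es} ∩ {s : ss⁻¹ ∈ W} ∩ {s : s⁻¹s ∈ V} ⊆ O. -/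

lemma IN_idem_eq {e : IN} (he : e * e = e) : ∀ p ∈ e.1, p.1 = p.2 := by
  rintro ⟨x, y⟩ hxy
  have h' : (x, y) ∈ (e * e).1 := by rw [he]; exact hxy
  obtain ⟨z, hz1, hz2⟩ := h'
  have hyz : y = z := e.2.1 x y z hxy hz1
  subst hyz
  exact e.2.2 x y y hxy hz2

/-- The topological inverse semigroup `I_ℕ` is weakly ditopological: for every
`f` and open neighborhood `O` of `f` there are open neighborhoods `U` of `f`,
`V` of `f⁻¹f` and `W` of `ff⁻¹` such that
`{s | ∃ b ∈ U, ∃ idempotent e ∈ W, b = es} ∩ {s | ss⁻¹ ∈ W} ∩ {s | s⁻¹s ∈ V} ⊆ O`. -/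
theorem IN_weakly_ditopological :
    ∀ f : IN, ∀ O : Set IN, IsOpen O → f ∈ O →
      ∃ U V W : Set IN, IsOpen U ∧ IsOpen V ∧ IsOpen W ∧
        f ∈ U ∧ f⁻¹ * f ∈ V ∧ f * f⁻¹ ∈ W ∧
        ({s : IN | ∃ b ∈ U, ∃ e : IN, e * e = e ∧ e ∈ W ∧ b = e * s} ∩
          {s : IN | s * s⁻¹ ∈ W} ∩ {s : IN | s⁻¹ * s ∈ V}) ⊆ O := by
  intro f O hO hf
  revert hf
  induction hO with
  | basic t ht =>
    intro hf
    rcases ht with (⟨x, y, rfl⟩ | ⟨x, rfl⟩) | ⟨y, rfl⟩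
    · -- t = {h | (x,y) ∈ h}
      refine ⟨{h : IN | (x, y) ∈ h.1}, Set.univ, Set.univ,
        TopologicalSpace.GenerateOpen.basic _ (Or.inl (Or.inl ⟨x, y, rfl⟩)),
        isOpen_univ, isOpen_univ, hf, trivial, trivial, ?_⟩
      rintro s ⟨⟨⟨b, hbU, e, hee, -, rfl⟩, -⟩, -⟩
      obtain ⟨z, hz1, hz2⟩ := hbU
      have := IN_idem_eq hee (x, z) hz1
      simp only at this
      subst this
      exact hz2
    · -- t = {h | ∀ y, (x,y) ∉ h}
      refine ⟨Set.univ, Set.univ, {h : IN | ∀ y, (x, y) ∉ h.1},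
        isOpen_univ, isOpen_univ,
        TopologicalSpace.GenerateOpen.basic _ (Or.inl (Or.inr ⟨x, rfl⟩)),
        trivial, trivial, ?_, ?_⟩
      · rintro z ⟨w, hw1, -⟩
        exact hf w hw1
      · rintro s ⟨⟨-, hsW⟩, -⟩ y hxy
        exact hsW x ⟨y, hxy, hxy⟩
    · -- t = {h | ∀ x, (x,y) ∉ h}
      refine ⟨Set.univ, {h : IN | ∀ x, (x, y) ∉ h.1}, Set.univ,
        isOpen_univ,
        TopologicalSpace.GenerateOpen.basic _ (Or.inr ⟨y, rfl⟩),
        isOpen_univ, trivial, ?_, trivial, ?_⟩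
      · rintro z ⟨w, -, hw2⟩
        exact hf w hw2
      · rintro s ⟨-, hsV⟩ x hxy
        exact hsV y ⟨x, hxy, hxy⟩
  | univ =>
    intro _
    exact ⟨Set.univ, Set.univ, Set.univ, isOpen_univ, isOpen_univ, isOpen_univ,
      trivial, trivial, trivial, fun s _ => trivial⟩
  | inter t1 t2 h1 h2 ih1 ih2 =>
    rintro ⟨hf1, hf2⟩
    obtain ⟨U1, V1, W1, hU1, hV1, hW1, hfU1, hfV1, hfW1, hinc1⟩ := ih1 hf1
    obtain ⟨U2, V2, W2, hU2, hV2, hW2, hfU2, hfV2, hfW2, hinc2⟩ := ih2 hf2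
    refine ⟨U1 ∩ U2, V1 ∩ V2, W1 ∩ W2, hU1.inter hU2, hV1.inter hV2,
      hW1.inter hW2, ⟨hfU1, hfU2⟩, ⟨hfV1, hfV2⟩, ⟨hfW1, hfW2⟩, ?_⟩
    rintro s ⟨⟨⟨b, hbU, e, hee, heW, hbe⟩, hsW⟩, hsV⟩
    exact ⟨hinc1 ⟨⟨⟨b, hbU.1, e, hee, heW.1, hbe⟩, hsW.1⟩, hsV.1⟩,
      hinc2 ⟨⟨⟨b, hbU.2, e, hee, heW.2, hbe⟩, hsW.2⟩, hsV.2⟩⟩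
  | sUnion T hT ih =>
    rintro ⟨t, htT, hft⟩
    obtain ⟨U, V, W, hU, hV, hW, hfU, hfV, hfW, hinc⟩ := ih t htT hft
    exact ⟨U, V, W, hU, hV, hW, hfU, hfV, hfW,
      fun s hs => ⟨t, htT, hinc hs⟩⟩
end

section
/- Every Clifford subsemigroup of ℕ^ℕ, endowed with the subspace topology, is a topological inverse semigroup; that is, the inversion map s ↦ s⁻¹ is continuous on any Clifford subsemigroup of ℕ^ℕ. -/
open Topology

/-- Key pointwise uniqueness lemma: if `g` is the Clifford inverse of `f`,
then `g n` is the unique `x` in the image of `f` with `f (f x) = f n`. -/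
theorem clifford_inv_unique_pt (f g : ℕ → ℕ)
    (h1 : f ∘ g ∘ f = f) (h2 : g ∘ f ∘ g = g) (hc : g ∘ f = f ∘ g)
    (n x u : ℕ) (hu : f u = x) (hx : f (f x) = f n) : x = g n := by
  have e1 : ∀ m, f (g (f m)) = f m := fun m => congrFun h1 m
  have e2 : ∀ m, g (f (g m)) = g m := fun m => congrFun h2 m
  have ec : ∀ m, g (f m) = f (g m) := fun m => congrFun hc m
  -- g (f (f m)) = f m for all m
  have eA : ∀ m, g (f (f m)) = f m := fun m => by
    rw [ec (f m), e1 m]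
  -- x = g (f x)
  have hx1 : g (f x) = x := by
    rw [← hu, eA u]
  -- g (f n) = f x
  have hx2 : g (f n) = f x := by rw [← hx, eA x]
  -- g (g (f n)) = g n
  have hgn : g (g (f n)) = g n := by
    rw [ec n, e2 n]
  rw [← hgn, hx2, hx1]

/-- Every Clifford subsemigroup of `ℕ^ℕ` (functions under left-to-right
composition, product topology), endowed with the subspace topology, is a
topological inverse semigroup: the inversion map is continuous.  Here `inv`
assigns to each element of `S` its (unique) inverse, and `S` is Clifford:
`x x⁻¹ = x⁻¹ x` for all `x ∈ S`. -/
theorem clifford_subsemigroup_of_NN_inversion_continuous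
    (S : Set (ℕ → ℕ))
    (hmul : ∀ f ∈ S, ∀ g ∈ S, g ∘ f ∈ S)
    (inv : (ℕ → ℕ) → (ℕ → ℕ))
    (hinvS : ∀ f ∈ S, inv f ∈ S)
    (hreg : ∀ f ∈ S, f ∘ inv f ∘ f = f ∧ inv f ∘ f ∘ inv f = inv f)
    (hcliff : ∀ f ∈ S, inv f ∘ f = f ∘ inv f)
    (huniq : ∀ f ∈ S, ∀ j ∈ S,
      f ∘ j ∘ f = f → j ∘ f ∘ j = j → j = inv f) :
    Continuous (fun s : {f : ℕ → ℕ // f ∈ S} => inv s.1) := by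
  apply continuous_pi
  intro n
  rw [continuous_iff_continuousAt]
  rintro ⟨f₀, hf₀⟩
  have h1 := (hreg f₀ hf₀).1
  have h2 := (hreg f₀ hf₀).2
  have hc := hcliff f₀ hf₀
  set g₀ := inv f₀ with hg₀def
  have e1 : ∀ m, f₀ (g₀ (f₀ m)) = f₀ m := fun m => congrFun h1 m
  have e2 : ∀ m, g₀ (f₀ (g₀ m)) = g₀ m := fun m => congrFun h2 m
  have ec : ∀ m, g₀ (f₀ m) = f₀ (g₀ m) := fun m => congrFun hc m
  set x₀ := g₀ n with hx₀def
  set w := g₀ x₀ with hwdef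
  -- f₀ w = x₀  (x₀ is in the image of f₀)
  have hfw : f₀ w = x₀ := by
    show f₀ (g₀ (g₀ n)) = g₀ n
    rw [← ec (g₀ n), e2 n]
  -- f₀ (f₀ x₀) = f₀ n
  have hffx : f₀ (f₀ x₀) = f₀ n := by
    show f₀ (f₀ (g₀ n)) = f₀ n
    rw [← ec n, e1 n]
  -- evaluation maps are eventually constant (discrete codomain)
  have hevals : ∀ m : ℕ, ∀ᶠ s : {f : ℕ → ℕ // f ∈ S} in 𝓝 ⟨f₀, hf₀⟩,
      s.1 m = f₀ m := by
    intro m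
    have hcm : Continuous (fun s : {f : ℕ → ℕ // f ∈ S} => s.1 m) :=
      (continuous_apply m).comp continuous_subtype_val
    have ht := hcm.tendsto (⟨f₀, hf₀⟩ : {f : ℕ → ℕ // f ∈ S})
    rw [nhds_discrete ℕ] at ht
    exact Filter.tendsto_pure.mp ht
  have hev : ∀ᶠ s : {f : ℕ → ℕ // f ∈ S} in 𝓝 ⟨f₀, hf₀⟩,
      inv s.1 n = inv f₀ n := by
    filter_upwards [hevals n, hevals w, hevals x₀, hevals (f₀ x₀)]
      with s hn hw hx hfx
    have hs1 := (hreg s.1 s.2).1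
    have hs2 := (hreg s.1 s.2).2
    have hsc := hcliff s.1 s.2
    have hu : s.1 w = x₀ := by rw [hw, hfw]
    have hx' : s.1 (s.1 x₀) = s.1 n := by
      rw [hx, hfx, hffx, hn]
    exact (clifford_inv_unique_pt s.1 (inv s.1) hs1 hs2 hsc n x₀ w hu hx').symm
  exact ContinuousAt.congr continuousAt_const (hev.mono fun s h => h.symm)
end
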